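/- Let r ≥ 3 and let H be an r-uniform hypergraph on an n-element vertex set V such that V can be partitioned into parts of size r² each, every hyperedge of H is contained in one part, and within each part every pair of distinct vertices lies in exactly one hyperedge (i.e., H is a disjoint union of Steiner systems S(2,r,r²)). Then H is linear, H contains no copy of B_4^r, and r·|E(H)| = (r+1)·n. -/
import Mathlib


/-- If an r-uniform hypergraph H on n vertices is a disjoint union of
Steiner systems S(2,r,r²) (the vertex set is partitioned into parts of size r², every
hyperedge lies in one part, and within each part every pair of distinct vertices lies
in exactly one hyperedge), then H is linear, B_4^r-free, and r·|E(H)| = (r+1)·n. -/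
theorem stmt_10 {V : Type*} [Fintype V] [DecidableEq V]
    (r n : ℕ) (hr : 3 ≤ r)
    (hn : Fintype.card V = n)
    (E : Finset (Finset V))
    (huniform : ∀ e ∈ E, e.card = r)
    (P : Finset (Finset V))
    (hpartcard : ∀ p ∈ P, p.card = r ^ 2)
    (hdisjoint : ∀ p ∈ P, ∀ q ∈ P, p ≠ q → p ∩ q = ∅)
    (hcover : ∀ v : V, ∃ p ∈ P, v ∈ p)
    (hedges : ∀ e ∈ E, ∃ p ∈ P, e ⊆ p)
    (hsteiner : ∀ p ∈ P, ∀ u ∈ p, ∀ v ∈ p, u ≠ v → ∃! e, e ∈ E ∧ u ∈ e ∧ v ∈ e) :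
    (∀ e ∈ E, ∀ f ∈ E, e ≠ f → (e ∩ f).card ≤ 1) ∧
    (¬ ∃ e₁ ∈ E, ∃ e₂ ∈ E, ∃ e₃ ∈ E, ∃ f ∈ E, ∃ v : V,
      e₁ ≠ e₂ ∧ e₁ ≠ e₃ ∧ e₁ ≠ f ∧ e₂ ≠ e₃ ∧ e₂ ≠ f ∧ e₃ ≠ f ∧
      v ∈ e₁ ∧ v ∈ e₂ ∧ v ∈ e₃ ∧ v ∉ f ∧
      (f ∩ e₁).Nonempty ∧ f ∩ e₂ = ∅ ∧ f ∩ e₃ = ∅) ∧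
    r * E.card = (r + 1) * n := by
  classical
  -- An edge containing a vertex of a part lies inside that part.
  have hA : ∀ e ∈ E, ∀ p ∈ P, ∀ v, v ∈ e → v ∈ p → e ⊆ p := by
    intro e he p hp v hve hvp
    obtain ⟨q, hq, heq⟩ := hedges e he
    by_cases h : p = q
    · subst h; exact heq
    · exfalso
      have hmem : v ∈ p ∩ q := Finset.mem_inter.mpr ⟨hvp, heq hve⟩
      rw [hdisjoint p hp q hq h] at hmem
      exact absurd hmem (Finset.notMem_empty v)
  -- Linearity
  have hlin : ∀ e ∈ E, ∀ f ∈ E, e ≠ f → (e ∩ f).card ≤ 1 := by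
    intro e he f hf hef
    by_contra h
    push_neg at h
    obtain ⟨u, hu, w, hw, huw⟩ := Finset.one_lt_card.mp h
    rw [Finset.mem_inter] at hu hw
    obtain ⟨p, hp, hup⟩ := hcover u
    have hep : e ⊆ p := hA e he p hp u hu.1 hup
    have hwp : w ∈ p := hep hw.1
    obtain ⟨g, _, hg⟩ := hsteiner p hp u hup w hwp huw
    exact hef ((hg e ⟨he, hu.1, hw.1⟩).trans (hg f ⟨hf, hu.2, hw.2⟩).symm)
  -- Degree of every vertex is r + 1.
  have hdeg : ∀ v : V, (E.filter (fun e => v ∈ e)).card = r + 1 := by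
    intro v
    obtain ⟨p, hp, hvp⟩ := hcover v
    set Ev := E.filter (fun e => v ∈ e) with hEvdef
    have hmemEv : ∀ e ∈ Ev, e ∈ E ∧ v ∈ e := fun e he => Finset.mem_filter.mp he
    have hdisjtr : ∀ e ∈ Ev, ∀ f ∈ Ev, e ≠ f →
        Disjoint (e.erase v) (f.erase v) := by
      intro e he f hf hef
      rw [Finset.disjoint_left]
      intro x hxe hxf
      obtain ⟨hxv, hxe'⟩ := Finset.mem_erase.mp hxe
      obtain ⟨_, hxf'⟩ := Finset.mem_erase.mp hxf
      have hxp : x ∈ p := hA e (hmemEv e he).1 p hp v (hmemEv e he).2 hvp hxe'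
      obtain ⟨g, _, hg⟩ := hsteiner p hp v hvp x hxp (Ne.symm hxv)
      exact hef ((hg e ⟨(hmemEv e he).1, (hmemEv e he).2, hxe'⟩).trans
        (hg f ⟨(hmemEv f hf).1, (hmemEv f hf).2, hxf'⟩).symm)
    have hunion : Ev.biUnion (fun e => e.erase v) = p.erase v := by
      ext w
      simp only [Finset.mem_biUnion, Finset.mem_erase]
      constructor
      · rintro ⟨e, he, hwv, hwe⟩
        exact ⟨hwv, hA e (hmemEv e he).1 p hp v (hmemEv e he).2 hvp hwe⟩
      · rintro ⟨hwv, hwp⟩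
        obtain ⟨e, ⟨heE, hve, hwe⟩, _⟩ := hsteiner p hp v hvp w hwp (Ne.symm hwv)
        exact ⟨e, Finset.mem_filter.mpr ⟨heE, hve⟩, hwv, hwe⟩
    have hcard : (p.erase v).card = Ev.card * (r - 1) := by
      rw [← hunion, Finset.card_biUnion hdisjtr]
      rw [Finset.sum_congr rfl (fun e he => ?_), Finset.sum_const, smul_eq_mul]
      rw [Finset.card_erase_of_mem (hmemEv e he).2, huniform e (hmemEv e he).1]
    have h1 : (p.erase v).card = r ^ 2 - 1 := by
      rw [Finset.card_erase_of_mem hvp, hpartcard p hp]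
    have hfac : r ^ 2 - 1 = (r + 1) * (r - 1) := by
      obtain ⟨s, rfl⟩ : ∃ s, r = s + 1 := ⟨r - 1, by omega⟩
      have h2 : (s + 1) ^ 2 = s * s + 2 * s + 1 := by ring
      have h3 : (s + 1 + 1) * (s + 1 - 1) = s * s + 2 * s := by
        simp only [Nat.add_sub_cancel]; ring
      omega
    have : Ev.card * (r - 1) = (r + 1) * (r - 1) := by
      rw [← hcard, h1, hfac]
    exact Nat.eq_of_mul_eq_mul_right (by omega) this
  refine ⟨hlin, ?_, ?_⟩
  · -- B4-freeness
    rintro ⟨e₁, he₁, e₂, he₂, e₃, he₃, f, hf, v, h12, h13, h1f, h23, h2f, h3f,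
      hv1, hv2, hv3, hvf, ⟨x, hx⟩, hf2, hf3⟩
    obtain ⟨p, hp, hxp⟩ := hcover x
    rw [Finset.mem_inter] at hx
    have he₁p : e₁ ⊆ p := hA e₁ he₁ p hp x hx.2 hxp
    have hvp : v ∈ p := he₁p hv1
    have hfp : f ⊆ p := hA f hf p hp x hx.1 hxp
    set Ev := E.filter (fun e => v ∈ e) with hEvdef
    have hcardEv : Ev.card = r + 1 := hdeg v
    -- For each w ∈ f there is an edge through v and w, not equal to e₂ or e₃.
    have hg : ∀ w : V, ∃ g : Finset V, w ∈ f →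
        g ∈ Ev \ {e₂, e₃} ∧ w ∈ g ∧ v ∈ g := by
      intro w
      by_cases hw : w ∈ f
      · have hwp : w ∈ p := hfp hw
        have hwv : v ≠ w := fun h => hvf (h ▸ hw)
        obtain ⟨g, ⟨hgE, hvg, hwg⟩, _⟩ := hsteiner p hp v hvp w hwp hwv
        refine ⟨g, fun _ => ⟨Finset.mem_sdiff.mpr ⟨Finset.mem_filter.mpr ⟨hgE, hvg⟩, ?_⟩,
          hwg, hvg⟩⟩
        simp only [Finset.mem_insert, Finset.mem_singleton]
        rintro (rfl | rfl)
        · exact (Finset.notMem_empty w) (hf2 ▸ Finset.mem_inter.mpr ⟨hw, hwg⟩)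
        · exact (Finset.notMem_empty w) (hf3 ▸ Finset.mem_inter.mpr ⟨hw, hwg⟩)
      · exact ⟨∅, fun h => absurd h hw⟩
    choose G hG using hg
    have hinj : Set.InjOn G f := by
      intro w hw w' hw' hww
      by_contra hne
      have h1 := hG w hw
      have h2 := hG w' hw'
      have hgE : G w ∈ E := (Finset.mem_filter.mp (Finset.mem_sdiff.mp h1.1).1).1
      have hgf : G w ≠ f := fun h => hvf (h ▸ h1.2.2)
      have : 1 < ((G w) ∩ f).card := by
        apply Finset.one_lt_card.mpr
        exact ⟨w, Finset.mem_inter.mpr ⟨h1.2.1, hw⟩,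
          w', Finset.mem_inter.mpr ⟨hww ▸ h2.2.1, hw'⟩, hne⟩
      exact absurd (hlin (G w) hgE f hf hgf) (by omega)
    have hmaps : ∀ w ∈ f, G w ∈ Ev \ {e₂, e₃} := fun w hw => (hG w hw).1
    have hle : f.card ≤ (Ev \ {e₂, e₃}).card :=
      Finset.card_le_card_of_injOn G hmaps hinj
    have hsub : ({e₂, e₃} : Finset (Finset V)) ⊆ Ev := by
      intro e he
      simp only [Finset.mem_insert, Finset.mem_singleton] at he
      rcases he with rfl | rfl
      · exact Finset.mem_filter.mpr ⟨he₂, hv2⟩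
      · exact Finset.mem_filter.mpr ⟨he₃, hv3⟩
    have hcard2 : ({e₂, e₃} : Finset (Finset V)).card = 2 := by
      rw [Finset.card_insert_of_notMem (by simp [h23]), Finset.card_singleton]
    have hsd : (Ev \ {e₂, e₃}).card = r + 1 - 2 := by
      rw [Finset.card_sdiff_of_subset hsub, hcard2, hcardEv]
    rw [huniform f hf, hsd] at hle
    omega
  · -- Counting
    have key : ∑ e ∈ E, e.card = ∑ v : V, (E.filter (fun e => v ∈ e)).card := by
      have h1 : ∀ e : Finset V, e.card = ∑ v : V, if v ∈ e then 1 else 0 := by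
        intro e
        rw [Finset.sum_ite_mem, Finset.univ_inter, Finset.sum_const, smul_eq_mul, mul_one]
      have h2 : ∀ v : V, (E.filter (fun e => v ∈ e)).card
          = ∑ e ∈ E, if v ∈ e then 1 else 0 := fun v => Finset.card_filter _ _
      simp_rw [h1, h2]
      exact Finset.sum_comm
    calc r * E.card = ∑ e ∈ E, e.card := by
          rw [Finset.sum_congr rfl huniform, Finset.sum_const, smul_eq_mul, mul_comm]
      _ = ∑ v : V, (E.filter (fun e => v ∈ e)).card := key
      _ = ∑ _v : V, (r + 1) := Finset.sum_congr rfl (fun v _ => hdeg v)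
      _ = (r + 1) * n := by
          rw [Finset.sum_const, Finset.card_univ, hn, smul_eq_mul, mul_comm]
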